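/- Let d be a positive integer and ω = e^(2πi/d). The d-th roots of unity ω^0, ω^1, …, ω^{d−1} are all contained in some regular lattice ℤe₁ + ℤe₂ + e in ℂ (where e₁, e₂ are ℝ-linearly independent complex numbers and e ∈ ℂ) if and only if d ∈ {1, 2, 3, 4, 6}. -/

import Mathlib

open Complex Polynomial


lemma tot_le_two {d : ℕ} (hd : 0 < d) (h : d.totient ≤ 2) :
    d ∈ ({1, 2, 3, 4, 6} : Set ℕ) := by
  have hdvd : d ∣ 12 := by
    rw [Nat.dvd_iff_prime_pow_dvd_dvd]
    intro p k hp hpk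
    have hp' : p.Prime := hp
    rcases Nat.eq_zero_or_pos k with rfl | hk
    · simp
    have h1 : (p ^ k).totient ∣ d.totient := Nat.totient_dvd_of_dvd hpk
    have h2 : (p ^ k).totient ≤ 2 :=
      le_trans (Nat.le_of_dvd (Nat.totient_pos.mpr hd) h1) h
    rw [Nat.totient_prime_pow hp' hk] at h2
    have hone : 1 ≤ p ^ (k - 1) := Nat.one_le_pow _ p hp'.pos
    have h2le : 2 ≤ p := hp'.two_le
    have hple : p ≤ 3 := by
      by_contra hc
      have h3 : 1 * 3 ≤ p ^ (k - 1) * (p - 1) := Nat.mul_le_mul hone (by omega)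
      omega
    interval_cases p
    · -- p = 2
      have hb : 2 ^ (k - 1) ≤ 2 := by omega
      have hk2 : k ≤ 2 := by
        by_contra hc
        have : 2 ^ 2 ≤ 2 ^ (k - 1) := Nat.pow_le_pow_right (by norm_num) (by omega)
        omega
      interval_cases k <;> norm_num
    · -- p = 3
      have hb : 3 ^ (k - 1) ≤ 1 := by omega
      have hk1 : k = 1 := by
        by_contra hc
        have : 3 ^ 1 ≤ 3 ^ (k - 1) := Nat.pow_le_pow_right (by norm_num) (by omega)
        omega
      subst hk1; norm_num
  have hle : d ≤ 12 := Nat.le_of_dvd (by norm_num) hdvd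
  simp only [Set.mem_insert_iff, Set.mem_singleton_iff]
  interval_cases d <;> revert hdvd h <;> decide


lemma li_one_omega {ω : ℂ} (him : ω.im ≠ 0) : LinearIndependent ℝ ![(1:ℂ), ω] := by
  rw [linearIndependent_fin2]
  refine ⟨?_, ?_⟩
  · simp only [Matrix.cons_val_one, Matrix.head_cons]
    intro h; exact him (by simp at h; simp [h])
  · intro a ha
    simp only [Matrix.cons_val_one, Matrix.head_cons, Matrix.cons_val_zero] at ha
    rw [Complex.real_smul] at ha
    have h1 := congrArg Complex.im ha
    simp only [Complex.mul_im, Complex.ofReal_re, Complex.ofReal_im, Complex.one_im, zero_mul, add_zero] at h1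
    rcases mul_eq_zero.mp h1 with h | h
    · rw [h] at ha; simp at ha
    · exact him h

lemma im_omega_pos {d : ℕ} (hd3 : 3 ≤ d) :
    (Complex.exp (2 * Real.pi * I / d)).im > 0 := by
  have hd0 : (0:ℝ) < d := by exact_mod_cast Nat.lt_of_lt_of_le (by norm_num) hd3
  have hrw : (2 * Real.pi * I / (d:ℂ)) = ((2 * Real.pi / d : ℝ) : ℂ) * I := by
    push_cast; ring
  rw [hrw, Complex.exp_ofReal_mul_I_im]
  apply Real.sin_pos_of_pos_of_lt_pi
  · positivity
  · rw [div_lt_iff₀ hd0]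
    have hpi : (0:ℝ) < Real.pi := Real.pi_pos
    have : (3:ℝ) ≤ d := by exact_mod_cast hd3
    nlinarith


lemma forward_core {d : ℕ} (hd3 : 3 ≤ d) (ω : ℂ) (hprim : IsPrimitiveRoot ω d)
    (e e₁ e₂ : ℂ) (hmem : ∀ k : ℕ, k < d → ∃ m n : ℤ, ω ^ k = (m : ℂ) * e₁ + (n : ℂ) * e₂ + e) :
    d.totient ≤ 2 := by
  have hd : 0 < d := by omega
  have hωd : ω ^ d = 1 := hprim.pow_eq_one
  have hall : ∀ k : ℕ, ∃ m n : ℤ, ω ^ k = (m : ℂ) * e₁ + (n : ℂ) * e₂ + e := by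
    intro k
    obtain ⟨m, n, h⟩ := hmem (k % d) (Nat.mod_lt _ hd)
    refine ⟨m, n, ?_⟩
    conv_lhs => rw [← Nat.div_add_mod k d, pow_add, pow_mul, hωd, one_pow, one_mul, h]
  choose m n hmn using hall
  set v : Fin 3 → (Fin 2 → ℚ) := fun j =>
    ![(m (j.1 + 1) : ℚ) - m j.1, (n (j.1 + 1) : ℚ) - n j.1] with hv
  have hnli : ¬ LinearIndependent ℚ v := by
    intro hli
    have := hli.fintype_card_le_finrank
    simp [Module.finrank_fin_fun] at this
  obtain ⟨g, hg, j0, hj0⟩ := Fintype.not_linearIndependent_iff.mp hnli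
  have h0 := congrFun hg 0
  have h1 := congrFun hg 1
  simp only [hv, Fin.sum_univ_three, Finset.sum_apply, Pi.add_apply, Pi.smul_apply,
    Matrix.cons_val_zero, Matrix.cons_val_one, Matrix.head_cons, smul_eq_mul,
    Pi.zero_apply] at h0 h1
  have h0c : (g 0 : ℂ) * ((m 1 : ℂ) - m 0) + (g 1 : ℂ) * ((m 2 : ℂ) - m 1)
      + (g 2 : ℂ) * ((m 3 : ℂ) - m 2) = 0 := by exact_mod_cast h0
  have h1c : (g 0 : ℂ) * ((n 1 : ℂ) - n 0) + (g 1 : ℂ) * ((n 2 : ℂ) - n 1)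
      + (g 2 : ℂ) * ((n 3 : ℂ) - n 2) = 0 := by exact_mod_cast h1
  have hkey : (ω - 1) * ((g 0 : ℂ) + (g 1 : ℂ) * ω + (g 2 : ℂ) * ω ^ 2) = 0 := by
    linear_combination (g 0 : ℂ) * (hmn 1) - (g 0 : ℂ) * (hmn 0) + (g 1 : ℂ) * (hmn 2)
      - (g 1 : ℂ) * (hmn 1) + (g 2 : ℂ) * (hmn 3) - (g 2 : ℂ) * (hmn 2)
      + e₁ * h0c + e₂ * h1c
  have hne : ω ≠ 1 := hprim.ne_one (by omega)
  have hq : (g 0 : ℂ) + (g 1 : ℂ) * ω + (g 2 : ℂ) * ω ^ 2 = 0 := by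
    rcases mul_eq_zero.mp hkey with h | h
    · exact absurd h (sub_ne_zero.mpr hne)
    · exact h
  set p : ℚ[X] := C (g 2) * X ^ 2 + C (g 1) * X + C (g 0) with hp
  have c0 : p.coeff 0 = g 0 := by simp [hp, coeff_add, coeff_C, coeff_C_mul]
  have c1 : p.coeff 1 = g 1 := by simp [hp, coeff_add, coeff_C, coeff_C_mul]
  have c2 : p.coeff 2 = g 2 := by simp [hp, coeff_add, coeff_C, coeff_C_mul]
  have hpne : p ≠ 0 := by
    intro hp0
    rw [hp0] at c0 c1 c2
    simp only [coeff_zero] at c0 c1 c2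
    apply hj0
    fin_cases j0
    · exact c0.symm
    · exact c1.symm
    · exact c2.symm
  have hroot : Polynomial.aeval ω p = 0 := by
    simp only [hp, map_add, map_mul, map_pow, aeval_C, aeval_X, eq_ratCast]
    linear_combination hq
  have hdeg : (minpoly ℚ ω).degree ≤ 2 :=
    le_trans (minpoly.degree_le_of_ne_zero ℚ ω hpne hroot) degree_quadratic_le
  rw [← Polynomial.cyclotomic_eq_minpoly_rat hprim hd] at hdeg
  have := (Polynomial.natDegree_le_iff_degree_le
    (p := Polynomial.cyclotomic d ℚ) (n := 2)).mpr hdeg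
  rwa [Polynomial.natDegree_cyclotomic] at this


theorem roots_of_unity_in_regular_lattice_iff (d : ℕ) (hd : 0 < d) (ω : ℂ)
    (hω : ω = Complex.exp (2 * Real.pi * I / d)) :
    (∃ e e₁ e₂ : ℂ, LinearIndependent ℝ ![e₁, e₂] ∧
      ∀ k : ℕ, k < d → ∃ m n : ℤ, ω ^ k = (m : ℂ) * e₁ + (n : ℂ) * e₂ + e) ↔
    d ∈ ({1, 2, 3, 4, 6} : Set ℕ) := by
  have hprim : IsPrimitiveRoot ω d := hω ▸ Complex.isPrimitiveRoot_exp d hd.ne'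
  constructor
  · rintro ⟨e, e₁, e₂, hli, hmem⟩
    by_cases h2 : d ≤ 2
    · interval_cases d
      · exact Set.mem_insert _ _
      · exact Set.mem_insert_of_mem _ (Set.mem_insert _ _)
    · push_neg at h2
      exact tot_le_two hd (forward_core (by omega) ω hprim e e₁ e₂ hmem)
  · intro h
    simp only [Set.mem_insert_iff, Set.mem_singleton_iff] at h
    have hli1I : LinearIndependent ℝ ![(1:ℂ), I] := by
      have := Complex.basisOneI.linearIndependent
      rwa [Complex.coe_basisOneI] at this
    rcases h with rfl | rfl | rfl | rfl | rfl
    · -- d = 1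
      refine ⟨0, 1, I, hli1I, fun k hk => ?_⟩
      interval_cases k
      exact ⟨1, 0, by push_cast; ring⟩
    · -- d = 2
      refine ⟨0, 1, I, hli1I, fun k hk => ?_⟩
      have hsq : ω ^ 2 = 1 := hprim.pow_eq_one
      have hne : ω ≠ 1 := hprim.ne_one (by norm_num)
      have hm1 : ω = -1 := by
        have hfac : (ω - 1) * (ω + 1) = 0 := by linear_combination hsq
        rcases mul_eq_zero.mp hfac with hx | hx
        · exact absurd hx (sub_ne_zero.mpr hne)
        · linear_combination hx
      interval_cases k
      · exact ⟨1, 0, by push_cast; ring⟩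
      · exact ⟨-1, 0, by push_cast; linear_combination hm1⟩
    · -- d = 3
      have him : ω.im > 0 := hω ▸ im_omega_pos (le_refl 3)
      have h3 : ω ^ 3 = 1 := hprim.pow_eq_one
      have hne : ω ≠ 1 := hprim.ne_one (by norm_num)
      have hrel : ω ^ 2 = -1 - ω := by
        have hfac : (ω - 1) * (ω ^ 2 + ω + 1) = 0 := by linear_combination h3
        rcases mul_eq_zero.mp hfac with hx | hx
        · exact absurd hx (sub_ne_zero.mpr hne)
        · linear_combination hx
      refine ⟨0, 1, ω, li_one_omega him.ne', fun k hk => ?_⟩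
      interval_cases k
      · exact ⟨1, 0, by push_cast; ring⟩
      · exact ⟨0, 1, by push_cast; ring⟩
      · exact ⟨-1, -1, by push_cast; linear_combination hrel⟩
    · -- d = 4
      have him : ω.im > 0 := hω ▸ im_omega_pos (by norm_num)
      have h4 : ω ^ 4 = 1 := hprim.pow_eq_one
      have h2ne : ω ^ 2 ≠ 1 := hprim.pow_ne_one_of_pos_of_lt (by norm_num) (by norm_num)
      have hrel : ω ^ 2 = -1 := by
        have hfac : (ω ^ 2 - 1) * (ω ^ 2 + 1) = 0 := by linear_combination h4
        rcases mul_eq_zero.mp hfac with hx | hx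
        · exact absurd hx (sub_ne_zero.mpr h2ne)
        · linear_combination hx
      refine ⟨0, 1, ω, li_one_omega him.ne', fun k hk => ?_⟩
      interval_cases k
      · exact ⟨1, 0, by push_cast; ring⟩
      · exact ⟨0, 1, by push_cast; ring⟩
      · exact ⟨-1, 0, by push_cast; linear_combination hrel⟩
      · exact ⟨0, -1, by push_cast; linear_combination ω * hrel⟩
    · -- d = 6
      have him : ω.im > 0 := hω ▸ im_omega_pos (by norm_num)
      have h6 : ω ^ 6 = 1 := hprim.pow_eq_one
      have h3ne : ω ^ 3 ≠ 1 := hprim.pow_ne_one_of_pos_of_lt (by norm_num) (by norm_num)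
      have h2ne : ω ^ 2 ≠ 1 := hprim.pow_ne_one_of_pos_of_lt (by norm_num) (by norm_num)
      have hcube : ω ^ 3 = -1 := by
        have hfac : (ω ^ 3 - 1) * (ω ^ 3 + 1) = 0 := by linear_combination h6
        rcases mul_eq_zero.mp hfac with hx | hx
        · exact absurd hx (sub_ne_zero.mpr h3ne)
        · linear_combination hx
      have hne1 : ω ≠ -1 := by
        intro hx
        exact h2ne (by rw [hx]; ring)
      have hrel : ω ^ 2 = ω - 1 := by
        have hfac : (ω + 1) * (ω ^ 2 - ω + 1) = 0 := by linear_combination hcube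
        rcases mul_eq_zero.mp hfac with hx | hx
        · exact absurd (eq_neg_of_add_eq_zero_left hx) hne1
        · linear_combination hx
      refine ⟨0, 1, ω, li_one_omega him.ne', fun k hk => ?_⟩
      interval_cases k
      · exact ⟨1, 0, by push_cast; ring⟩
      · exact ⟨0, 1, by push_cast; ring⟩
      · exact ⟨-1, 1, by push_cast; linear_combination hrel⟩
      · exact ⟨-1, 0, by push_cast; linear_combination hcube⟩
      · exact ⟨0, -1, by push_cast; linear_combination ω * hcube⟩
      · exact ⟨1, -1, by push_cast; linear_combination ω ^ 2 * hcube - hrel⟩
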